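/- Stationary weights of curl-free lattice gases: if c(n,m) > 0 for n ≥ 1, m ≥ 0 satisfies the curl-free condition c(n,m-1)/c(m,n-1) = (c(n,0)/c(1,n-1))·(c(1,m-1)/c(m,0)) for all n,m ≥ 1, then the weights w(0) = 1, w(n) = Π_{m=1}^n c(1,m-1)/c(m,0) satisfy the detailed-balance-type relation w(n) w(m) c(n+1, m) = w(n+1) w(m+1) · (c(m+1, n)·c(n+1,0)·c(1,m)) / (c(1,n)·c(m+1,0)) for all n, m ≥ 0 — equivalently, w(n+1) w(m) c(m+1, n) · c(1,n)/c(n+1,0) is symmetric under exchanging the roles induced by a particle jump. -/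

import Mathlib

open Finset

/-- Stationary weights `w(0) = 1`, `w(n) = Π_{m=1}^n c(1,m-1)/c(m,0)`. -/
noncomputable def statW (c : ℕ → ℕ → ℝ) (n : ℕ) : ℝ :=
  ∏ m ∈ Finset.range n, c 1 m / c (m + 1) 0

theorem curl_free_stationary_weights (c : ℕ → ℕ → ℝ)
    (hc : ∀ n m : ℕ, 1 ≤ n → 0 < c n m)
    (hcurl : ∀ n m : ℕ, 1 ≤ n → 1 ≤ m →
      c n (m - 1) / c m (n - 1) = c n 0 / c 1 (n - 1) * (c 1 (m - 1) / c m 0)) :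
    (∀ n : ℕ, 1 ≤ n → statW c n * c n 0 = statW c (n - 1) * c 1 (n - 1)) ∧
    (∀ n m : ℕ, 1 ≤ n → 1 ≤ m →
      c n (m - 1) * statW c n * statW c (m - 1)
        = c m (n - 1) * statW c m * statW c (n - 1)) := by
  have key : ∀ n : ℕ, 1 ≤ n → statW c n * c n 0 = statW c (n - 1) * c 1 (n - 1) := by
    intro n hn
    obtain ⟨k, rfl⟩ := Nat.exists_eq_add_of_le hn
    simp only [Nat.add_sub_cancel_left, Nat.add_comm 1 k]
    rw [statW, Finset.prod_range_succ, ← statW]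
    have h := (hc (k + 1) 0 (Nat.le_add_left 1 k)).ne'
    field_simp
    simp only [Nat.add_sub_cancel]
  refine ⟨key, fun n m hn hm => ?_⟩
  have hw : ∀ j : ℕ, 0 < statW c j := fun j =>
    Finset.prod_pos fun i _ => div_pos (hc 1 i le_rfl) (hc (i + 1) 0 (Nat.le_add_left 1 i))
  have h1 := key n hn
  have h2 := key m hm
  have h3 := hcurl n m hn hm
  have hcm : c m (n - 1) ≠ 0 := (hc m (n - 1) hm).ne'
  have hc1n : c 1 (n - 1) ≠ 0 := (hc 1 (n - 1) le_rfl).ne'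
  have hcm0 : c m 0 ≠ 0 := (hc m 0 hm).ne'
  have hcn0 : c n 0 ≠ 0 := (hc n 0 hn).ne'
  have e3 : c n (m - 1) = c m (n - 1) * (c n 0 / c 1 (n - 1) * (c 1 (m - 1) / c m 0)) := by
    field_simp at h3 ⊢; linarith [h3]
  have e1 : statW c n = statW c (n - 1) * c 1 (n - 1) / c n 0 := by
    field_simp; linarith [h1]
  have e2 : statW c m = statW c (m - 1) * c 1 (m - 1) / c m 0 := by
    field_simp; linarith [h2]
  rw [e3, e1, e2]
  field_simp
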